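/- Suppose the sequence (u_m)_{m≥1} defined by u_m = 5^{-m}(a_0 - (9/7) Σ_{k=1}^∞ 3^{-k} a_k + (2/7) Σ_{k=1}^m 5^k a_k) + (9/7) Σ_{k=1}^∞ 3^{-k} a_{m+k}, where (a_m)_{m≥0} is a bounded real sequence, satisfies for all m ≥ 2 the recurrence u_m = (16/5) u_{m-1} - (3/5) u_{m-2} - a_m - (3/5) a_{m-1}, where u_0 := a_0. -/

import Mathlib

set_option maxHeartbeats 1000000 in


/-- the explicit formula for u_m satisfies the half-gasket recurrence. -/
theorem stmt10 (a u : ℕ → ℝ) (hb : ∃ C : ℝ, ∀ m : ℕ, |a m| ≤ C)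
    (hu0 : u 0 = a 0)
    (hu : ∀ m : ℕ, 1 ≤ m →
      u m = ((1:ℝ)/5)^m * (a 0 - (9/7) * (∑' k : ℕ, ((1:ℝ)/3)^(k+1) * a (k+1))
          + (2/7) * ∑ k ∈ Finset.Icc 1 m, (5:ℝ)^k * a k)
        + (9/7) * ∑' k : ℕ, ((1:ℝ)/3)^(k+1) * a (m + (k+1))) :
    ∀ m : ℕ, 2 ≤ m →
      u m = (16/5) * u (m-1) - (3/5) * u (m-2) - a m - (3/5) * a (m-1) := by
  obtain ⟨C, hC⟩ := hb
  have hsum : ∀ m : ℕ, Summable (fun k : ℕ => ((1:ℝ)/3)^(k+1) * a (m + (k+1))) := by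
    intro m
    have hg : Summable (fun k : ℕ => ((1:ℝ)/3)^k) :=
      summable_geometric_of_lt_one (by norm_num) (by norm_num)
    have hgeo : Summable (fun k : ℕ => C * ((1:ℝ)/3)^(k+1)) := by
      have h2 := hg.mul_left (C * ((1:ℝ)/3))
      exact h2.congr (fun k => by ring)
    have hbnd : ∀ k : ℕ, ‖((1:ℝ)/3)^(k+1) * a (m + (k+1))‖ ≤ C * ((1:ℝ)/3)^(k+1) := by
      intro k
      rw [norm_mul, norm_pow, Real.norm_eq_abs, Real.norm_eq_abs,
        abs_of_nonneg (by norm_num : (0:ℝ) ≤ 1/3), mul_comm C]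
      exact mul_le_mul_of_nonneg_left (hC _) (by positivity)
    exact Summable.of_norm_bounded hgeo hbnd
  have key : ∀ m : ℕ, (∑' k : ℕ, ((1:ℝ)/3)^(k+1) * a (m + (k+1)))
      = (1/3) * a (m+1) + (1/3) * ∑' k : ℕ, ((1:ℝ)/3)^(k+1) * a (m + 1 + (k+1)) := by
    intro m
    rw [Summable.tsum_eq_zero_add (hsum m)]
    have he : ∀ k : ℕ, ((1:ℝ)/3)^(k+1+1) * a (m + (k+1+1))
        = (1/3) * (((1:ℝ)/3)^(k+1) * a (m + 1 + (k+1))) := by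
      intro k
      have h : m + (k+1+1) = m + 1 + (k+1) := by omega
      rw [h]; ring
    simp_rw [he, tsum_mul_left]
    norm_num
  have hform : ∀ m : ℕ,
      u m = ((1:ℝ)/5)^m * (a 0 - (9/7) * (∑' k : ℕ, ((1:ℝ)/3)^(k+1) * a (k+1))
          + (2/7) * ∑ k ∈ Finset.Icc 1 m, (5:ℝ)^k * a k)
        + (9/7) * ∑' k : ℕ, ((1:ℝ)/3)^(k+1) * a (m + (k+1)) := by
    intro m
    rcases Nat.eq_zero_or_pos m with h | h
    · subst h
      rw [hu0]
      simp only [pow_zero, one_mul, zero_add]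
      rw [Finset.Icc_eq_empty (by omega), Finset.sum_empty]
      ring
    · exact hu m h
  intro m hm
  obtain ⟨n, rfl⟩ : ∃ n, m = n + 2 := ⟨m - 2, by omega⟩
  have e1 : n + 2 - 1 = n + 1 := by omega
  have e2 : n + 2 - 2 = n := by omega
  rw [e1, e2, hform (n+2), hform (n+1), hform n, key n, key (n+1)]
  have e3 : n + 1 + 1 = n + 2 := by omega
  rw [e3]
  have hs2 : ∑ k ∈ Finset.Icc 1 (n+2), (5:ℝ)^k * a k
      = ∑ k ∈ Finset.Icc 1 (n+1), (5:ℝ)^k * a k + (5:ℝ)^(n+2) * a (n+2) := by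
    have := Finset.sum_Icc_succ_top (a := 1) (b := n+1)
      (f := fun k => (5:ℝ)^k * a k) (by omega)
    rw [show n + 1 + 1 = n + 2 from by omega] at this
    exact this
  have hs1 : ∑ k ∈ Finset.Icc 1 (n+1), (5:ℝ)^k * a k
      = ∑ k ∈ Finset.Icc 1 n, (5:ℝ)^k * a k + (5:ℝ)^(n+1) * a (n+1) := by
    exact Finset.sum_Icc_succ_top (a := 1) (b := n)
      (f := fun k => (5:ℝ)^k * a k) (by omega)
  rw [hs2, hs1]
  have hconv : ∀ j : ℕ, ((1:ℝ)/5)^j = ((5:ℝ)^j)⁻¹ := by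
    intro j; rw [one_div, inv_pow]
  simp only [hconv]
  have h5 : (5:ℝ)^n ≠ 0 := pow_ne_zero _ (by norm_num)
  field_simp
  ring
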